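/- The function f(z) = 2(e^{−z²}/√π − |z|·erfc(|z|)) is even, continuous, strictly positive, integrable on ℝ, and ∫_{−∞}^{∞} f(z) dz = 1. -/

import Mathlib

open MeasureTheory Real Set Filter Topology

/-- The complementary error function `erfc(x) = (2/√π) ∫_x^∞ e^{−t²} dt`. -/
noncomputable def erfc (x : ℝ) : ℝ :=
  (2 / Real.sqrt π) * ∫ t in Set.Ioi x, Real.exp (-t ^ 2)

/-- The limiting internal-space distribution
`f(z) = 2(e^{−z²}/√π − |z|·erfc(|z|))` of Fibonacci random tiling patches. -/
noncomputable def fdistr (z : ℝ) : ℝ :=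
  2 * (Real.exp (-z ^ 2) / Real.sqrt π - |z| * erfc |z|)


noncomputable def E (x : ℝ) : ℝ := ∫ t in Set.Ioi x, Real.exp (-t ^ 2)

lemma sqrt_pi_pos : 0 < Real.sqrt π := Real.sqrt_pos.mpr Real.pi_pos

lemma gauss_integrable : Integrable (fun t : ℝ => Real.exp (-t ^ 2)) := by
  simpa using integrable_exp_neg_mul_sq (one_pos)

lemma E_eq (x : ℝ) : E x = E 0 - ∫ t in (0:ℝ)..x, Real.exp (-t ^ 2) := by
  have h := intervalIntegral.integral_Iic_sub_Iic (a := (0:ℝ)) (b := x) (μ := volume)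
    (gauss_integrable.integrableOn) (gauss_integrable.integrableOn)
  have hx := intervalIntegral.integral_Iic_add_Ioi (b := x) (μ := volume)
    (gauss_integrable.integrableOn) (gauss_integrable.integrableOn)
  have h0 := intervalIntegral.integral_Iic_add_Ioi (b := (0:ℝ)) (μ := volume)
    (gauss_integrable.integrableOn) (gauss_integrable.integrableOn)
  unfold E
  linarith

lemma E_hasDerivAt (x : ℝ) : HasDerivAt E (-Real.exp (-x ^ 2)) x := by
  have h1 : HasDerivAt (fun u => ∫ t in (0:ℝ)..u, Real.exp (-t ^ 2)) (Real.exp (-x ^ 2)) x := by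
    exact intervalIntegral.integral_hasDerivAt_right
      (gauss_integrable.intervalIntegrable)
      (gauss_integrable.aestronglyMeasurable.stronglyMeasurableAtFilter)
      (Real.continuous_exp.comp (continuous_pow 2).neg).continuousAt
  have : HasDerivAt (fun u => E 0 - ∫ t in (0:ℝ)..u, Real.exp (-t ^ 2))
      (0 - Real.exp (-x ^ 2)) x := (hasDerivAt_const x (E 0)).sub h1
  simpa [← E_eq] using this

lemma E_cont : Continuous E :=
  continuous_iff_continuousAt.2 fun x => (E_hasDerivAt x).continuousAt

lemma E_pos (x : ℝ) : 0 < E x := by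
  rw [E, setIntegral_pos_iff_support_of_nonneg_ae
    (Eventually.of_forall fun t => (Real.exp_pos _).le) gauss_integrable.integrableOn]
  have : (Function.support fun t : ℝ => Real.exp (-t ^ 2)) = Set.univ := by
    ext t; simp [Function.support, (Real.exp_pos (-t^2)).ne']
  rw [this, Set.univ_inter]
  simp [Real.volume_Ioi]

lemma erfc_hasDerivAt (x : ℝ) :
    HasDerivAt erfc (-(2 / Real.sqrt π * Real.exp (-x ^ 2))) x := by
  have := (E_hasDerivAt x).const_mul (2 / Real.sqrt π)
  rw [show erfc = fun y => 2 / Real.sqrt π * E y from rfl]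
  simpa [erfc, E, mul_comm, mul_neg] using this

lemma erfc_eq (x : ℝ) : erfc x = (2 / Real.sqrt π) * E x := rfl

lemma erfc_pos (x : ℝ) : 0 < erfc x :=
  mul_pos (div_pos two_pos sqrt_pi_pos) (E_pos x)

lemma E_zero : E 0 = Real.sqrt π / 2 := by
  have := integral_gaussian_Ioi 1
  simpa [E] using this

lemma erfc_zero : erfc 0 = 1 := by
  rw [erfc_eq, E_zero]
  field_simp

lemma E_tendsto : Tendsto E atTop (𝓝 0) := by
  have h := intervalIntegral_tendsto_integral_Ioi 0 (gauss_integrable.integrableOn (s := Ioi 0))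
    tendsto_id
  have h2 : Tendsto (fun x => E 0 - ∫ t in (0:ℝ)..x, Real.exp (-t ^ 2)) atTop (𝓝 (E 0 - E 0)) :=
    tendsto_const_nhds.sub h
  simpa [← E_eq] using h2

lemma tE_integral {x : ℝ} :
    ∫ t in Ioi x, t * Real.exp (-t ^ 2) = Real.exp (-x ^ 2) / 2 := by
  have hint : Integrable (fun t : ℝ => t * Real.exp (-t ^ 2)) := by
    simpa using integrable_mul_exp_neg_mul_sq (one_pos)
  have hderiv : ∀ t ∈ Ici x, HasDerivAt (fun t : ℝ => -Real.exp (-t ^ 2) / 2)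
      (t * Real.exp (-t ^ 2)) t := by
    intro t _
    have h1 : HasDerivAt (fun t : ℝ => -t ^ 2) (-(2 * t)) t := by
      simpa using ((hasDerivAt_pow 2 t).fun_neg)
    have h2 := (h1.exp).neg.div_const 2
    refine h2.congr_deriv ?_; ring
  have htend : Tendsto (fun t : ℝ => -Real.exp (-t ^ 2) / 2) atTop (𝓝 0) := by
    have : Tendsto (fun t : ℝ => Real.exp (-t ^ 2)) atTop (𝓝 0) := by
      apply Real.tendsto_exp_atBot.comp
      exact tendsto_neg_atBot_iff.mpr (tendsto_pow_atTop two_ne_zero)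
    have := (this.neg).div_const 2
    simpa using this
  have := integral_Ioi_of_hasDerivAt_of_tendsto' hderiv hint.integrableOn htend
  rw [this]; ring

lemma gauss_tendsto : Tendsto (fun t : ℝ => Real.exp (-t ^ 2)) atTop (𝓝 0) := by
  apply Real.tendsto_exp_atBot.comp
  exact tendsto_neg_atBot_iff.mpr (tendsto_pow_atTop two_ne_zero)

lemma E_le {x : ℝ} (hx : 0 < x) : E x ≤ Real.exp (-x ^ 2) / (2 * x) := by
  have hint : Integrable (fun t : ℝ => t * Real.exp (-t ^ 2)) := by
    simpa using integrable_mul_exp_neg_mul_sq (one_pos)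
  have hmono : E x ≤ ∫ t in Ioi x, (1 / x) * (t * Real.exp (-t ^ 2)) := by
    apply setIntegral_mono_on gauss_integrable.integrableOn
      ((hint.integrableOn).const_mul (1/x)) measurableSet_Ioi
    intro t ht
    have hxt : x ≤ t := le_of_lt ht
    rw [one_div, inv_mul_eq_div]
    rw [le_div_iff₀ hx, mul_comm]
    exact mul_le_mul_of_nonneg_right hxt (Real.exp_pos _).le
  calc E x ≤ ∫ t in Ioi x, (1 / x) * (t * Real.exp (-t ^ 2)) := hmono
    _ = (1 / x) * ∫ t in Ioi x, t * Real.exp (-t ^ 2) := by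
        rw [integral_const_mul]
    _ = Real.exp (-x ^ 2) / (2 * x) := by rw [tE_integral]; field_simp

lemma xE_tendsto : Tendsto (fun x : ℝ => x * E x) atTop (𝓝 0) := by
  have hup : ∀ᶠ x : ℝ in atTop, x * E x ≤ Real.exp (-x ^ 2) / 2 := by
    filter_upwards [eventually_gt_atTop (0:ℝ)] with x hx
    calc x * E x ≤ x * (Real.exp (-x ^ 2) / (2 * x)) :=
          mul_le_mul_of_nonneg_left (E_le hx) hx.le
      _ = Real.exp (-x ^ 2) / 2 := by field_simp
  have hlo : ∀ᶠ x : ℝ in atTop, 0 ≤ x * E x := by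
    filter_upwards [eventually_ge_atTop (0:ℝ)] with x hx
    exact mul_nonneg hx (E_pos x).le
  have hub : Tendsto (fun x : ℝ => Real.exp (-x ^ 2) / 2) atTop (𝓝 0) := by
    simpa using gauss_tendsto.div_const 2
  exact tendsto_of_tendsto_of_tendsto_of_le_of_le' tendsto_const_nhds hub hlo hup

noncomputable def g (x : ℝ) : ℝ := Real.exp (-x ^ 2) / Real.sqrt π - x * erfc x

lemma g_hasDerivAt (x : ℝ) : HasDerivAt g (-erfc x) x := by
  have h1 : HasDerivAt (fun x : ℝ => -x ^ 2) (-(2 * x)) x := by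
    simpa using ((hasDerivAt_pow 2 x).fun_neg)
  have h2 : HasDerivAt (fun x : ℝ => Real.exp (-x ^ 2) / Real.sqrt π)
      (Real.exp (-x ^ 2) * -(2 * x) / Real.sqrt π) x := (h1.exp).div_const _
  have h3 : HasDerivAt (fun x : ℝ => x * erfc x)
      (1 * erfc x + x * (-(2 / Real.sqrt π * Real.exp (-x ^ 2)))) x :=
    (hasDerivAt_id x).mul (erfc_hasDerivAt x)
  have h4 := h2.sub h3
  refine h4.congr_deriv ?_
  ring

lemma erfc_tendsto : Tendsto erfc atTop (𝓝 0) := by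
  have := E_tendsto.const_mul (2 / Real.sqrt π)
  rw [mul_zero] at this; exact this

lemma xerfc_tendsto : Tendsto (fun x : ℝ => x * erfc x) atTop (𝓝 0) := by
  have := xE_tendsto.const_mul (2 / Real.sqrt π)
  have h : (fun x : ℝ => 2 / Real.sqrt π * (x * E x)) = fun x => x * erfc x := by
    funext x; rw [erfc_eq]; ring
  rw [h] at this
  simpa using this

lemma g_tendsto : Tendsto g atTop (𝓝 0) := by
  have h1 : Tendsto (fun x : ℝ => Real.exp (-x ^ 2) / Real.sqrt π) atTop (𝓝 0) := by
    simpa using gauss_tendsto.div_const (Real.sqrt π)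
  have := h1.sub xerfc_tendsto; simp only [sub_zero] at this; exact this

lemma g_strictAnti : StrictAnti g := by
  apply strictAnti_of_deriv_neg
  intro x
  rw [(g_hasDerivAt x).deriv]
  simpa using erfc_pos x

lemma g_pos (x : ℝ) : 0 < g x := by
  have h1 : (0:ℝ) ≤ g (x + 1) := by
    apply le_of_tendsto g_tendsto
    filter_upwards [eventually_ge_atTop (x + 1)] with y hy
    exact g_strictAnti.antitone hy
  calc (0:ℝ) ≤ g (x + 1) := h1
    _ < g x := g_strictAnti (lt_add_one x)

lemma fdistr_eq (z : ℝ) : fdistr z = 2 * g |z| := by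
  simp [fdistr, g, sq_abs]

lemma erfc_cont : Continuous erfc :=
  continuous_const.mul E_cont

lemma fdistr_cont : Continuous fdistr := by
  unfold fdistr
  exact continuous_const.mul (((Real.continuous_exp.comp (continuous_pow 2).neg).div_const _).sub
    (continuous_abs.mul (erfc_cont.comp continuous_abs)))

lemma fdistr_pos (z : ℝ) : 0 < fdistr z := by
  rw [fdistr_eq]; linarith [g_pos |z|]

lemma fdistr_nonneg (z : ℝ) : 0 ≤ fdistr z := (fdistr_pos z).le

lemma fdistr_le (z : ℝ) : fdistr z ≤ 2 / Real.sqrt π * Real.exp (-z ^ 2) := by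
  unfold fdistr
  have h := mul_nonneg (abs_nonneg z) (erfc_pos |z|).le
  have : Real.exp (-z ^ 2) / Real.sqrt π - |z| * erfc |z| ≤ Real.exp (-z ^ 2) / Real.sqrt π := by
    linarith
  calc 2 * (Real.exp (-z ^ 2) / Real.sqrt π - |z| * erfc |z|)
      ≤ 2 * (Real.exp (-z ^ 2) / Real.sqrt π) := by linarith
    _ = 2 / Real.sqrt π * Real.exp (-z ^ 2) := by ring

lemma fdistr_integrable : Integrable fdistr := by
  apply Integrable.mono (gauss_integrable.const_mul (2 / Real.sqrt π))
    fdistr_cont.aestronglyMeasurable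
  apply Eventually.of_forall
  intro z
  rw [Real.norm_eq_abs, Real.norm_eq_abs, abs_of_nonneg (fdistr_nonneg z),
    abs_of_nonneg (by positivity)]
  exact fdistr_le z

noncomputable def H (x : ℝ) : ℝ :=
  2 * (x * Real.exp (-x ^ 2) / (2 * Real.sqrt π) - (x ^ 2 / 2 + 1 / 4) * erfc x)

lemma H_hasDerivAt (x : ℝ) : HasDerivAt H (2 * g x) x := by
  have h1 : HasDerivAt (fun x : ℝ => -x ^ 2) (-(2 * x)) x := by
    simpa using ((hasDerivAt_pow 2 x).fun_neg)
  have h2 : HasDerivAt (fun x : ℝ => x * Real.exp (-x ^ 2) / (2 * Real.sqrt π))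
      ((1 * Real.exp (-x ^ 2) + x * (Real.exp (-x ^ 2) * -(2 * x))) / (2 * Real.sqrt π)) x :=
    ((hasDerivAt_id x).mul h1.exp).div_const _
  have h3 : HasDerivAt (fun x : ℝ => (x ^ 2 / 2 + 1 / 4) * erfc x)
      (((2 : ℕ) * x ^ 1 / 2 + 0) * erfc x
        + (x ^ 2 / 2 + 1 / 4) * (-(2 / Real.sqrt π * Real.exp (-x ^ 2)))) x :=
    (((hasDerivAt_pow 2 x).div_const 2).add (hasDerivAt_const x (1/4))).mul (erfc_hasDerivAt x)
  have h4 := (h2.sub h3).const_mul 2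
  refine h4.congr_deriv ?_
  unfold g
  have hc : Real.sqrt π ≠ 0 := sqrt_pi_pos.ne'
  field_simp
  ring

lemma H_tendsto : Tendsto H atTop (𝓝 0) := by
  have hxe : Tendsto (fun x : ℝ => x * Real.exp (-x ^ 2)) atTop (𝓝 0) := by
    have hup : ∀ᶠ x : ℝ in atTop, x * Real.exp (-x ^ 2) ≤ x * Real.exp (-x) := by
      filter_upwards [eventually_ge_atTop (1:ℝ)] with x hx
      have hxx : x ≤ x ^ 2 := by nlinarith
      exact mul_le_mul_of_nonneg_left (Real.exp_le_exp.2 (by linarith)) (by linarith)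
    have hlo : ∀ᶠ x : ℝ in atTop, 0 ≤ x * Real.exp (-x ^ 2) := by
      filter_upwards [eventually_ge_atTop (0:ℝ)] with x hx
      positivity
    have hub : Tendsto (fun x : ℝ => x * Real.exp (-x)) atTop (𝓝 0) := by
      simpa using tendsto_pow_mul_exp_neg_atTop_nhds_zero 1
    exact tendsto_of_tendsto_of_tendsto_of_le_of_le' tendsto_const_nhds hub hlo hup
  have hx2e : Tendsto (fun x : ℝ => x ^ 2 * erfc x) atTop (𝓝 0) := by
    have hup : ∀ᶠ x : ℝ in atTop, x ^ 2 * erfc x ≤ (2 / Real.sqrt π) * (x * Real.exp (-x ^ 2) / 2) := by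
      filter_upwards [eventually_gt_atTop (0:ℝ)] with x hx
      rw [erfc_eq]
      have hE := E_le hx
      have h2 : x ^ 2 * (2 / Real.sqrt π * E x) = 2 / Real.sqrt π * (x ^ 2 * E x) := by ring
      rw [h2]
      apply mul_le_mul_of_nonneg_left _ (by positivity)
      calc x ^ 2 * E x ≤ x ^ 2 * (Real.exp (-x ^ 2) / (2 * x)) :=
            mul_le_mul_of_nonneg_left hE (by positivity)
        _ = x * Real.exp (-x ^ 2) / 2 := by field_simp
    have hlo : ∀ᶠ x : ℝ in atTop, 0 ≤ x ^ 2 * erfc x := by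
      filter_upwards with x
      exact mul_nonneg (sq_nonneg x) (erfc_pos x).le
    have hub : Tendsto (fun x : ℝ => (2 / Real.sqrt π) * (x * Real.exp (-x ^ 2) / 2)) atTop (𝓝 0) := by
      simpa using (hxe.div_const 2).const_mul (2 / Real.sqrt π)
    exact tendsto_of_tendsto_of_tendsto_of_le_of_le' tendsto_const_nhds hub hlo hup
  have h : Tendsto (fun x : ℝ => 2 * (x * Real.exp (-x ^ 2) / (2 * Real.sqrt π)
      - ((x ^ 2 * erfc x) / 2 + (1 / 4) * erfc x))) atTop (𝓝 (2 * (0 / (2 * Real.sqrt π) - (0 / 2 + (1/4) * 0)))) := by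
    exact ((hxe.div_const _).sub ((hx2e.div_const 2).add (erfc_tendsto.const_mul (1/4)))).const_mul 2
  have heq : (fun x : ℝ => 2 * (x * Real.exp (-x ^ 2) / (2 * Real.sqrt π)
      - ((x ^ 2 * erfc x) / 2 + (1 / 4) * erfc x))) = H := by
    funext x; unfold H; ring
  rw [heq] at h
  simpa using h

lemma fdistr_integral_Ioi : ∫ z in Ioi (0:ℝ), fdistr z = 1 / 2 := by
  have hderiv : ∀ x ∈ Ici (0:ℝ), HasDerivAt H (fdistr x) x := by
    intro x hx
    have := H_hasDerivAt x
    rwa [show 2 * g x = fdistr x by rw [fdistr_eq, abs_of_nonneg hx]] at this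
  have h := integral_Ioi_of_hasDerivAt_of_tendsto' hderiv
    fdistr_integrable.integrableOn H_tendsto
  rw [h]
  unfold H
  rw [erfc_zero]
  norm_num

/-- `f` is even, continuous, strictly positive, integrable on `ℝ`,
and `∫ f = 1`. -/
theorem fdistr_properties :
    (∀ z : ℝ, fdistr (-z) = fdistr z) ∧
    Continuous fdistr ∧
    (∀ z : ℝ, 0 < fdistr z) ∧
    Integrable fdistr ∧
    (∫ z : ℝ, fdistr z) = 1 := by
  refine ⟨fun z => by simp [fdistr], fdistr_cont, fdistr_pos, fdistr_integrable, ?_⟩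
  have habs : ∀ z : ℝ, fdistr |z| = fdistr z := by
    intro z
    rw [fdistr_eq, fdistr_eq, abs_abs]
  have h := integral_comp_abs (f := fun x => fdistr x)
  simp only [habs] at h
  rw [h, fdistr_integral_Ioi]
  norm_num
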